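/- Let N < d_x, let X, X_ε ∈ ℝ^{d_x×N} both have rank N, and let Y ∈ ℝ^{d_y×N}. Let d_1 ∈ ℕ, set p := min(d_x, d_1, d_y), and assume either rank(Y) ≤ p or the p-th largest eigenvalue of YYᵀ is strictly greater than its (p+1)-th largest eigenvalue. Let λ > 0, η > 0, and let (W̃_2, W̃_1) ∈ ℝ^{d_y×d_1} × ℝ^{d_1×d_x} be a global minimizer of the clean loss ‖W_2W_1X − Y‖_F². Let W_1 : [0,∞) → ℝ^{d_1×d_x} and W_2 : [0,∞) → ℝ^{d_y×d_1} be differentiable trajectories satisfying the gradient-flow equation W_1'(t) = η·W_2(t)ᵀ(Y − W_2(t)W_1(t)X_ε)X_εᵀ + η·λ·(W̃_1X − W_1(t)X_ε)X_εᵀ for all t ≥ 0, such that: ‖W_1(0)‖_F ≤ δ for some δ > 0; ‖W_2(t)‖_F ≤ M for all t ≥ 0 and some M > 0; and W_1(t), W_2(t) converge as t → ∞ to matrices W_1(∞), W_2(∞) forming a global minimizer of the student-teacher loss ‖W_2W_1X_ε − Y‖_F² + λ‖W_1X_ε − W̃_1X‖_F². Then ‖W_2(∞)W_1(∞) − U_pU_pᵀY(X_εᵀX_ε)^{-1}X_εᵀ‖_F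 ≤ M·δ. -/

import Mathlib

open Matrix
open RealInnerProductSpace

set_option maxHeartbeats 1600000

noncomputable section

attribute [local instance] Matrix.normedAddCommGroup Matrix.normedSpace

/-- Squared Frobenius norm ‖M‖_F² of a real matrix. -/
def frobSq {m n : ℕ} (M : Matrix (Fin m) (Fin n) ℝ) : ℝ := ∑ i, ∑ j, (M i j) ^ 2

/-- Frobenius norm ‖M‖_F of a real matrix. -/
def frobNorm {m n : ℕ} (M : Matrix (Fin m) (Fin n) ℝ) : ℝ := Real.sqrt (frobSq M)

lemma frobSq_nonneg {m n : ℕ} (M : Matrix (Fin m) (Fin n) ℝ) : 0 ≤ frobSq M :=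
  Finset.sum_nonneg fun _ _ => Finset.sum_nonneg fun _ _ => sq_nonneg _

lemma frobSq_eq_zero_iff {m n : ℕ} {M : Matrix (Fin m) (Fin n) ℝ} :
    frobSq M = 0 ↔ M = 0 := by
  constructor
  · intro h
    ext i j
    have h1 : ∀ i ∈ Finset.univ, (0:ℝ) ≤ ∑ j, (M i j)^2 :=
      fun _ _ => Finset.sum_nonneg fun _ _ => sq_nonneg _
    have h2 := (Finset.sum_eq_zero_iff_of_nonneg h1).1 h i (Finset.mem_univ i)
    have h3 := (Finset.sum_eq_zero_iff_of_nonneg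
      (fun j _ => sq_nonneg (M i j))).1 h2 j (Finset.mem_univ j)
    have := pow_eq_zero_iff (n := 2) (by norm_num) |>.1 h3
    simpa using this
  · intro h; simp [h, frobSq]

lemma frobSq_eq_trace {m n : ℕ} (M : Matrix (Fin m) (Fin n) ℝ) :
    frobSq M = Matrix.trace (M * Mᵀ) := by
  simp [frobSq, Matrix.trace, Matrix.mul_apply, Matrix.diag, sq]

lemma frobSq_eq_trace' {m n : ℕ} (M : Matrix (Fin m) (Fin n) ℝ) :
    frobSq M = Matrix.trace (Mᵀ * M) := by
  rw [frobSq_eq_trace, Matrix.trace_mul_comm]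

lemma frobNorm_nonneg {m n : ℕ} (M : Matrix (Fin m) (Fin n) ℝ) : 0 ≤ frobNorm M :=
  Real.sqrt_nonneg _

lemma frobNorm_sq {m n : ℕ} (M : Matrix (Fin m) (Fin n) ℝ) :
    frobNorm M ^ 2 = frobSq M := Real.sq_sqrt (frobSq_nonneg M)

lemma frobSq_mul_le {m n k : ℕ} (A : Matrix (Fin m) (Fin n) ℝ) (B : Matrix (Fin n) (Fin k) ℝ) :
    frobSq (A * B) ≤ frobSq A * frobSq B := by
  have h : ∀ i j, ((A * B) i j)^2 ≤ (∑ l, (A i l)^2) * (∑ l, (B l j)^2) := by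
    intro i j
    have := Finset.sum_mul_sq_le_sq_mul_sq (R := ℝ) Finset.univ
      (fun l => A i l) (fun l => B l j)
    rw [Matrix.mul_apply]
    exact this
  calc frobSq (A * B) ≤ ∑ i, ∑ j, (∑ l, (A i l)^2) * (∑ l, (B l j)^2) := by
        apply Finset.sum_le_sum; intro i _
        exact Finset.sum_le_sum fun j _ => h i j
    _ = (∑ i, ∑ l, (A i l)^2) * (∑ j, ∑ l, (B l j)^2) :=
        (Finset.sum_mul_sum Finset.univ Finset.univ _ _).symm
    _ = frobSq A * frobSq B := by
        rw [frobSq, frobSq, Finset.sum_comm (f := fun j l => (B l j)^2)]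

lemma frobNorm_mul_le {m n k : ℕ} (A : Matrix (Fin m) (Fin n) ℝ) (B : Matrix (Fin n) (Fin k) ℝ) :
    frobNorm (A * B) ≤ frobNorm A * frobNorm B := by
  rw [frobNorm, frobNorm, frobNorm, ← Real.sqrt_mul (frobSq_nonneg A)]
  exact Real.sqrt_le_sqrt (frobSq_mul_le A B)

lemma frobSq_neg {m n : ℕ} (M : Matrix (Fin m) (Fin n) ℝ) : frobSq (-M) = frobSq M := by
  simp [frobSq]

lemma frobSq_transpose {m n : ℕ} (M : Matrix (Fin m) (Fin n) ℝ) :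
    frobSq Mᵀ = frobSq M := by
  rw [frobSq, frobSq, Finset.sum_comm]
  simp [Matrix.transpose_apply]

lemma frobSq_projL {m n : ℕ} {Q : Matrix (Fin m) (Fin m) ℝ} (hs : Qᵀ = Q) (hi : Q * Q = Q)
    (M : Matrix (Fin m) (Fin n) ℝ) : frobSq (Q * M) = Matrix.trace (Mᵀ * Q * M) := by
  rw [frobSq_eq_trace', Matrix.transpose_mul, hs]
  rw [show Mᵀ * Q * (Q * M) = Mᵀ * (Q * Q) * M by simp only [Matrix.mul_assoc]]
  rw [hi]

lemma proj_oneSub_symm {m : ℕ} {Q : Matrix (Fin m) (Fin m) ℝ} (hs : Qᵀ = Q) :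
    (1 - Q)ᵀ = 1 - Q := by rw [Matrix.transpose_sub, Matrix.transpose_one, hs]

lemma proj_oneSub_idem {m : ℕ} {Q : Matrix (Fin m) (Fin m) ℝ} (hi : Q * Q = Q) :
    (1 - Q) * (1 - Q) = 1 - Q := by
  rw [Matrix.sub_mul, Matrix.mul_sub, Matrix.mul_sub, hi]
  simp

lemma frobSq_proj_split {m n : ℕ} {Q : Matrix (Fin m) (Fin m) ℝ} (hs : Qᵀ = Q) (hi : Q * Q = Q)
    (M : Matrix (Fin m) (Fin n) ℝ) :
    frobSq M = frobSq (Q * M) + frobSq (M - Q * M) := by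
  have h1 : M - Q * M = (1 - Q) * M := by rw [Matrix.sub_mul, Matrix.one_mul]
  have h2 : Mᵀ * Q * M + Mᵀ * (1 - Q) * M = Mᵀ * M := by
    rw [Matrix.mul_assoc Mᵀ Q M, Matrix.mul_assoc Mᵀ (1 - Q) M, ← Matrix.mul_add,
      ← Matrix.add_mul, add_sub_cancel, Matrix.one_mul]
  rw [h1, frobSq_projL hs hi, frobSq_projL (proj_oneSub_symm hs) (proj_oneSub_idem hi),
    ← Matrix.trace_add, h2, ← frobSq_eq_trace']

lemma frobSq_projL_le {m n : ℕ} {Q : Matrix (Fin m) (Fin m) ℝ} (hs : Qᵀ = Q) (hi : Q * Q = Q)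
    (M : Matrix (Fin m) (Fin n) ℝ) : frobSq (Q * M) ≤ frobSq M := by
  rw [frobSq_proj_split hs hi M]
  have := frobSq_nonneg (M - Q * M)
  linarith

lemma frobSq_projR_le {m n : ℕ} {Q : Matrix (Fin n) (Fin n) ℝ} (hs : Qᵀ = Q) (hi : Q * Q = Q)
    (M : Matrix (Fin m) (Fin n) ℝ) : frobSq (M * Q) ≤ frobSq M := by
  have h : (M * Q)ᵀ = Q * Mᵀ := by rw [Matrix.transpose_mul, hs]
  calc frobSq (M * Q) = frobSq (Q * Mᵀ) := by rw [← h, frobSq_transpose]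
    _ ≤ frobSq Mᵀ := frobSq_projL_le hs hi Mᵀ
    _ = frobSq M := frobSq_transpose M

lemma frobSq_orthL {m n k : ℕ} {O : Matrix (Fin m) (Fin k) ℝ} (hO : Oᵀ * O = 1)
    (M : Matrix (Fin k) (Fin n) ℝ) : frobSq (O * M) = frobSq M := by
  rw [frobSq_eq_trace', Matrix.transpose_mul]
  rw [show Mᵀ * Oᵀ * (O * M) = Mᵀ * (Oᵀ * O) * M by simp only [Matrix.mul_assoc]]
  rw [hO, Matrix.mul_one, ← frobSq_eq_trace']

lemma proj_diag_eq_sum_sq {m : ℕ} {Q : Matrix (Fin m) (Fin m) ℝ} (hs : Qᵀ = Q)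
    (hi : Q * Q = Q) (i : Fin m) : Q i i = ∑ k, (Q k i) ^ 2 := by
  conv_lhs => rw [← hi]
  rw [Matrix.mul_apply]
  apply Finset.sum_congr rfl
  intro k _
  have h2 : Q k i = Q i k := (congrFun (congrFun hs i) k)
  rw [← h2, sq]

lemma proj_diag_nonneg {m : ℕ} {Q : Matrix (Fin m) (Fin m) ℝ} (hs : Qᵀ = Q)
    (hi : Q * Q = Q) (i : Fin m) : 0 ≤ Q i i := by
  rw [proj_diag_eq_sum_sq hs hi]
  exact Finset.sum_nonneg fun _ _ => sq_nonneg _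

lemma proj_diag_le_one {m : ℕ} {Q : Matrix (Fin m) (Fin m) ℝ} (hs : Qᵀ = Q)
    (hi : Q * Q = Q) (i : Fin m) : Q i i ≤ 1 := by
  have h0 := proj_diag_eq_sum_sq hs hi i
  have h1 : (Q i i)^2 ≤ ∑ k, (Q k i)^2 :=
    Finset.single_le_sum (f := fun k => (Q k i)^2) (fun k _ => sq_nonneg _) (Finset.mem_univ i)
  rw [← h0] at h1
  nlinarith [proj_diag_nonneg hs hi i]

lemma proj_col_of_diag_one {m : ℕ} {Q : Matrix (Fin m) (Fin m) ℝ} (hs : Qᵀ = Q)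
    (hi : Q * Q = Q) {i : Fin m} (h : Q i i = 1) (k : Fin m) :
    Q k i = if k = i then 1 else 0 := by
  have hd : (1 - Q) i i = 0 := by simp [Matrix.sub_apply, h]
  have := proj_diag_eq_sum_sq (proj_oneSub_symm hs) (proj_oneSub_idem hi) i
  rw [hd] at this
  have hz : ∀ k ∈ Finset.univ, ((1 - Q) k i)^2 = 0 := by
    intro k _
    exact (Finset.sum_eq_zero_iff_of_nonneg (fun k _ => sq_nonneg ((1-Q) k i))).1 this.symm k
      (Finset.mem_univ k)
  have hzk := hz k (Finset.mem_univ k)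
  have : (1 - Q) k i = 0 := by
    have := sq_eq_zero_iff.1 hzk; exact this
  have h2 : Q k i = (1 : Matrix (Fin m) (Fin m) ℝ) k i := by
    have := sub_eq_zero.1 (by simpa [Matrix.sub_apply] using this)
    simpa using this.symm
  rw [h2, Matrix.one_apply]

lemma proj_col_of_diag_zero {m : ℕ} {Q : Matrix (Fin m) (Fin m) ℝ} (hs : Qᵀ = Q)
    (hi : Q * Q = Q) {i : Fin m} (h : Q i i = 0) (k : Fin m) : Q k i = 0 := by
  have := proj_diag_eq_sum_sq hs hi i
  rw [h] at this
  have hz := (Finset.sum_eq_zero_iff_of_nonneg (fun k _ => sq_nonneg (Q k i))).1 this.symm k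
    (Finset.mem_univ k)
  exact sq_eq_zero_iff.1 hz

lemma euclid_inner_eq {m : ℕ} (x y : EuclideanSpace ℝ (Fin m)) :
    ⟪x, y⟫ = ∑ i, x i * y i := by
  rw [PiLp.inner_apply]
  apply Finset.sum_congr rfl
  intro i _
  rw [RCLike.inner_apply, starRingEnd_apply, star_trivial]
  exact mul_comm _ _

lemma exists_proj_of_rank_le {dy N p : ℕ} (Z : Matrix (Fin dy) (Fin N) ℝ) (h : Z.rank ≤ p) :
    ∃ Q : Matrix (Fin dy) (Fin dy) ℝ, Qᵀ = Q ∧ Q * Q = Q ∧ Q * Z = Z ∧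
      Matrix.trace Q ≤ (p : ℝ) := by
  classical
  set E := EuclideanSpace ℝ (Fin dy)
  set L : (Fin N → ℝ) →ₗ[ℝ] E :=
    ((WithLp.linearEquiv 2 ℝ (Fin dy → ℝ)).symm.toLinearMap).comp Z.mulVecLin with hL
  set S : Submodule ℝ E := LinearMap.range L with hS
  have hfin : Module.finrank ℝ S = Z.rank := by
    rw [hS, hL, LinearMap.range_comp]
    rw [show Z.rank = Module.finrank ℝ (LinearMap.range Z.mulVecLin) from rfl]
    exact LinearEquiv.finrank_map_eq (WithLp.linearEquiv 2 ℝ (Fin dy → ℝ)).symm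
      (LinearMap.range Z.mulVecLin)
  set n := Module.finrank ℝ S with hn
  have hnp : n ≤ p := le_of_eq_of_le hfin h
  set b := stdOrthonormalBasis ℝ S with hb
  set ψ : S →ₗ[ℝ] (Fin dy → ℝ) :=
    (WithLp.linearEquiv 2 ℝ (Fin dy → ℝ)).toLinearMap.comp S.subtype with hψ
  set u : Fin n → Fin dy → ℝ := fun k => ψ (b k) with hu
  have hON : ∀ k l, ∑ i, u k i * u l i = if k = l then (1:ℝ) else 0 := by
    intro k l
    have h1 := orthonormal_iff_ite.mp b.orthonormal k l
    rw [Submodule.coe_inner, euclid_inner_eq] at h1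
    exact h1
  have hinner : ∀ (k : Fin n) (x : S), ⟪b k, x⟫ = ∑ l, u k l * ψ x l := by
    intro k x
    rw [Submodule.coe_inner, euclid_inner_eq]
    rfl
  have hrepr : ∀ (x : S) (i : Fin dy),
      ∑ k, (∑ l, u k l * ψ x l) * u k i = ψ x i := by
    intro x i
    have h1 := b.sum_repr' x
    have h2 := congrArg ψ h1
    rw [map_sum] at h2
    simp only [_root_.map_smul] at h2
    have h4 := congrFun h2 i
    rw [Finset.sum_apply] at h4
    calc ∑ k, (∑ l, u k l * ψ x l) * u k i
        = ∑ k, ⟪b k, x⟫ * u k i := by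
          apply Finset.sum_congr rfl; intro k _; rw [hinner k x]
      _ = ψ x i := by rw [← h4]; exact Finset.sum_congr rfl fun k _ => rfl
  refine ⟨Matrix.of fun i j => ∑ k, u k i * u k j, ?_, ?_, ?_, ?_⟩
  · ext i j
    simp only [Matrix.transpose_apply, Matrix.of_apply]
    exact Finset.sum_congr rfl fun k _ => mul_comm _ _
  · ext i j
    simp only [Matrix.mul_apply, Matrix.of_apply]
    calc ∑ l, (∑ k, u k i * u k l) * (∑ k', u k' l * u k' j)
        = ∑ l, ∑ k, ∑ k', (u k i * u k' j) * (u k l * u k' l) := by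
          apply Finset.sum_congr rfl; intro l _
          rw [Finset.sum_mul_sum]
          apply Finset.sum_congr rfl; intro k _
          apply Finset.sum_congr rfl; intro k' _
          ring
      _ = ∑ k, ∑ k', ∑ l, (u k i * u k' j) * (u k l * u k' l) := by
          rw [Finset.sum_comm]
          apply Finset.sum_congr rfl; intro k _
          rw [Finset.sum_comm]
      _ = ∑ k, ∑ k', (u k i * u k' j) * ∑ l, u k l * u k' l := by
          apply Finset.sum_congr rfl; intro k _
          apply Finset.sum_congr rfl; intro k' _
          rw [Finset.mul_sum]
      _ = ∑ k, u k i * u k j := by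
          apply Finset.sum_congr rfl; intro k _
          rw [Finset.sum_eq_single k]
          · rw [hON k k]; simp
          · intro k' _ hk'; rw [hON k k']; simp [Ne.symm hk']
          · intro hk; exact absurd (Finset.mem_univ k) hk
  · ext i j
    simp only [Matrix.mul_apply, Matrix.of_apply]
    have hcol : ∃ x : S, ∀ i', ψ x i' = Z i' j := by
      refine ⟨⟨L (Pi.single j 1), LinearMap.mem_range_self L _⟩, ?_⟩
      intro i'
      show (Z.mulVecLin (Pi.single j 1)) i' = Z i' j
      simp [Matrix.mulVecLin_apply, Matrix.mulVec_single]
    obtain ⟨x, hx⟩ := hcol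
    calc ∑ l, (∑ k, u k i * u k l) * Z l j
        = ∑ l, ∑ k, (u k l * ψ x l) * u k i := by
          apply Finset.sum_congr rfl; intro l _
          rw [Finset.sum_mul]
          apply Finset.sum_congr rfl; intro k _
          rw [hx l]; ring
      _ = ∑ k, ∑ l, (u k l * ψ x l) * u k i := Finset.sum_comm
      _ = ∑ k, (∑ l, u k l * ψ x l) * u k i := by
          apply Finset.sum_congr rfl; intro k _
          rw [Finset.sum_mul]
      _ = ψ x i := hrepr x i
      _ = Z i j := hx i
  · rw [Matrix.trace]
    calc ∑ i, (Matrix.of fun i j => ∑ k, u k i * u k j).diag i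
        = ∑ i, ∑ k, u k i * u k i := by rfl
      _ = ∑ k, ∑ i, u k i * u k i := Finset.sum_comm
      _ = ∑ k : Fin n, (1:ℝ) := by
          apply Finset.sum_congr rfl; intro k _; rw [hON k k]; simp
      _ = (n : ℝ) := by simp
      _ ≤ (p : ℝ) := by exact_mod_cast hnp

lemma isUnit_det_of_rank_full {n : ℕ} (A : Matrix (Fin n) (Fin n) ℝ) (h : A.rank = n) :
    IsUnit A.det := by
  classical
  rw [isUnit_iff_ne_zero]
  intro hdet0
  obtain ⟨v, hv0, hAv⟩ := Matrix.exists_mulVec_eq_zero_iff.2 hdet0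
  have hker : v ∈ LinearMap.ker A.mulVecLin := by
    rw [LinearMap.mem_ker, Matrix.mulVecLin_apply]
    exact hAv
  have hrn := LinearMap.finrank_range_add_finrank_ker A.mulVecLin
  have hfull : Module.finrank ℝ (LinearMap.range A.mulVecLin) = n := h
  have hpi : Module.finrank ℝ (Fin n → ℝ) = n := by simp
  rw [hfull, hpi] at hrn
  have hker0 : Module.finrank ℝ (LinearMap.ker A.mulVecLin) = 0 := by omega
  have : LinearMap.ker A.mulVecLin = ⊥ := Submodule.finrank_eq_zero.1 hker0
  rw [this] at hker
  exact hv0 (by simpa using hker)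

lemma cand_factor {dy N d1 p : ℕ} (hpd1 : p ≤ d1) (Yh : Matrix (Fin dy) (Fin N) ℝ) :
    (Matrix.of (fun (i : Fin dy) (k : Fin d1) =>
        if (i : ℕ) = (k : ℕ) ∧ (i : ℕ) < p then (1:ℝ) else 0)) *
      (Matrix.of (fun (k : Fin d1) (j : Fin N) =>
        if h : (k : ℕ) < dy then Yh ⟨k, h⟩ j else 0))
    = Matrix.of (fun (i : Fin dy) (j : Fin N) => if (i : ℕ) < p then Yh i j else 0) := by
  classical
  ext i j
  rw [Matrix.mul_apply, Matrix.of_apply]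
  by_cases hip : (i : ℕ) < p
  · rw [if_pos hip]
    rw [Finset.sum_eq_single (⟨(i : ℕ), lt_of_lt_of_le hip hpd1⟩ : Fin d1)]
    · simp [hip]
    · intro k _ hk
      simp only [Matrix.of_apply]
      rw [if_neg, zero_mul]
      rintro ⟨h1, -⟩
      exact hk (Fin.val_injective h1.symm)
    · intro h; exact absurd (Finset.mem_univ _) h
  · rw [if_neg hip]
    apply Finset.sum_eq_zero
    intro k _
    simp only [Matrix.of_apply]
    rw [if_neg, zero_mul]
    rintro ⟨-, h2⟩
    exact hip h2

lemma sigma_tail_zero_of_rank_le {dy N p : ℕ} {σ : Fin dy → ℝ} {Yh : Matrix (Fin dy) (Fin N) ℝ}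
    (hσ : Antitone σ) (hσnn : ∀ i, 0 ≤ σ i)
    (hdiag : Yh * Yhᵀ = Matrix.diagonal σ) (hrank : Yh.rank ≤ p) :
    ∀ i : Fin dy, p ≤ (i : ℕ) → σ i = 0 := by
  classical
  intro i hi
  by_contra hne
  have hpos : 0 < σ i := lt_of_le_of_ne (hσnn i) (Ne.symm hne)
  have hcard : Fintype.card {j : Fin dy // σ j ≠ 0} ≤ p := by
    rw [← Matrix.rank_diagonal σ, ← hdiag, Matrix.rank_self_mul_transpose]
    exact hrank
  have hinj : Function.Injective (fun j : Fin (p + 1) =>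
      (⟨⟨(j : ℕ), by omega⟩, by
        have : σ i ≤ σ ⟨(j : ℕ), by omega⟩ := hσ (by rw [Fin.le_def]; simp; omega)
        have : 0 < σ ⟨(j : ℕ), by omega⟩ := lt_of_lt_of_le hpos this
        exact ne_of_gt this⟩ : {j : Fin dy // σ j ≠ 0})) := by
    intro a b hab
    have := congrArg (fun x : {j : Fin dy // σ j ≠ 0} => ((x : Fin dy) : ℕ)) hab
    simpa [Fin.val_injective.eq_iff] using this
  have := Fintype.card_le_of_injective _ hinj
  rw [Fintype.card_fin] at this
  omega

lemma sigma_eq_row_sq {dy N : ℕ} {σ : Fin dy → ℝ} {Yh : Matrix (Fin dy) (Fin N) ℝ}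
    (hdiag : Yh * Yhᵀ = Matrix.diagonal σ) (i : Fin dy) : σ i = ∑ j, (Yh i j) ^ 2 := by
  have h := congrFun (congrFun hdiag i) i
  simp only [Matrix.mul_apply, Matrix.transpose_apply, Matrix.diagonal_apply_eq] at h
  rw [← h]
  exact Finset.sum_congr rfl fun j _ => (sq (Yh i j)).symm ▸ rfl

lemma row_zero_of_sigma_zero {dy N : ℕ} {σ : Fin dy → ℝ} {Yh : Matrix (Fin dy) (Fin N) ℝ}
    (hdiag : Yh * Yhᵀ = Matrix.diagonal σ) {i : Fin dy} (h : σ i = 0) (j : Fin N) :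
    Yh i j = 0 := by
  have h0 := (sigma_eq_row_sq hdiag i).symm
  rw [h] at h0
  have := (Finset.sum_eq_zero_iff_of_nonneg (fun j _ => sq_nonneg (Yh i j))).1 h0 j
    (Finset.mem_univ j)
  exact sq_eq_zero_iff.1 this

theorem EY_core {dy N : ℕ} (p : ℕ) (hp1 : 1 ≤ p) (hpdy : p < dy)
    (σ : Fin dy → ℝ) (hσ : Antitone σ)
    (Yh Zh : Matrix (Fin dy) (Fin N) ℝ)
    (hdiag : Yh * Yhᵀ = Matrix.diagonal σ)
    (hgap : σ ⟨p, hpdy⟩ < σ ⟨p - 1, by omega⟩)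
    (hrank : Zh.rank ≤ p)
    (hminZ : frobSq (Zh - Yh) ≤
      frobSq ((Matrix.of (fun (i : Fin dy) (j : Fin N) => if (i : ℕ) < p then Yh i j else 0)) - Yh)) :
    Zh = Matrix.of (fun (i : Fin dy) (j : Fin N) => if (i : ℕ) < p then Yh i j else 0) := by
  classical
  obtain ⟨Q, hQs, hQi, hQZ, hQtr⟩ := exists_proj_of_rank_le Zh hrank
  set π := σ ⟨p, hpdy⟩ with hπ
  have hσnn : ∀ i, 0 ≤ σ i := fun i => by
    rw [sigma_eq_row_sq hdiag i]; exact Finset.sum_nonneg fun _ _ => sq_nonneg _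
  have hπ0 : 0 ≤ π := hσnn _
  set F : Finset (Fin dy) := Finset.univ.filter (fun i : Fin dy => (i : ℕ) < p) with hF
  have hcard : F.card = p := by
    rw [hF]
    rw [show Finset.univ.filter (fun i : Fin dy => (i:ℕ) < p)
        = Finset.image (Fin.castLE (le_of_lt hpdy)) Finset.univ by
      ext x
      simp only [Finset.mem_filter, Finset.mem_univ, true_and, Finset.mem_image]
      constructor
      · intro hx; exact ⟨⟨(x:ℕ), hx⟩, Fin.val_injective rfl⟩
      · rintro ⟨y, rfl⟩; exact y.isLt]
    rw [Finset.card_image_of_injective _ (Fin.castLE_injective _), Finset.card_univ,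
      Fintype.card_fin]
  -- Pythagoras decomposition
  have key1 : frobSq (Zh - Yh) = frobSq (Zh - Q * Yh) + ∑ i, σ i * (1 - Q i i) := by
    have hsplit := frobSq_proj_split hQs hQi (Zh - Yh)
    have e1 : Q * (Zh - Yh) = Zh - Q * Yh := by rw [Matrix.mul_sub, hQZ]
    have e2 : (Zh - Yh) - Q * (Zh - Yh) = -((1 - Q) * Yh) := by
      rw [e1, Matrix.sub_mul, Matrix.one_mul]
      abel
    have e3 : frobSq ((1 - Q) * Yh) = ∑ i, σ i * (1 - Q i i) := by
      rw [frobSq_projL (proj_oneSub_symm hQs) (proj_oneSub_idem hQi)]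
      rw [Matrix.mul_assoc, Matrix.trace_mul_comm, Matrix.mul_assoc, hdiag, Matrix.trace]
      apply Finset.sum_congr rfl
      intro i _
      have hdd : ((1 - Q) * Matrix.diagonal σ) i i = (1 - Q i i) * σ i := by
        rw [Matrix.mul_diagonal]
        simp [Matrix.sub_apply, Matrix.one_apply]
      rw [Matrix.diag_apply, hdd]
      ring
    rw [hsplit, e2, frobSq_neg, e3, e1]
  have key2 : frobSq ((Matrix.of (fun (i : Fin dy) (j : Fin N) => if (i : ℕ) < p then Yh i j else 0)) - Yh)
      = ∑ i : Fin dy, (if (i : ℕ) < p then 0 else σ i) := by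
    rw [frobSq]
    apply Finset.sum_congr rfl
    intro i _
    by_cases hi : (i : ℕ) < p
    · simp [hi, Matrix.sub_apply]
    · simp only [hi, if_false, Matrix.sub_apply, Matrix.of_apply]
      rw [sigma_eq_row_sq hdiag i]
      apply Finset.sum_congr rfl
      intro j _
      simp [hi]
  -- scalar bookkeeping
  set c := fun i : Fin dy => Q i i with hc
  have hc0 : ∀ i, 0 ≤ c i := fun i => proj_diag_nonneg hQs hQi i
  have hc1 : ∀ i, c i ≤ 1 := fun i => proj_diag_le_one hQs hQi i
  have hsumc : ∑ i, c i ≤ (p : ℝ) := by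
    have htr : Matrix.trace Q = ∑ i, c i := rfl
    rw [← htr]
    exact hQtr
  have hσF : ∀ i ∈ F, π ≤ σ i := by
    intro i hi
    rw [hF, Finset.mem_filter] at hi
    exact hσ (by rw [Fin.le_def]; exact le_of_lt hi.2)
  have hσFgap : ∀ i ∈ F, π < σ i := by
    intro i hi
    rw [hF, Finset.mem_filter] at hi
    have h1 : σ ⟨p - 1, by omega⟩ ≤ σ i := hσ (by rw [Fin.le_def]; simp; omega)
    linarith
  have hσFc : ∀ i ∈ Finset.univ.filter (fun i : Fin dy => ¬ (i : ℕ) < p), σ i ≤ π := by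
    intro i hi
    rw [Finset.mem_filter] at hi
    exact hσ (by rw [Fin.le_def]; simp; omega)
  set Fc := Finset.univ.filter (fun i : Fin dy => ¬ (i : ℕ) < p) with hFc
  -- decompose sums
  have hsplitsum : ∀ f : Fin dy → ℝ, ∑ i, f i = ∑ i ∈ F, f i + ∑ i ∈ Fc, f i := by
    intro f
    rw [hF, hFc]
    exact (Finset.sum_filter_add_sum_filter_not Finset.univ _ f).symm
  have key2' : ∑ i : Fin dy, (if (i : ℕ) < p then (0:ℝ) else σ i) = ∑ i ∈ Fc, σ i := by
    rw [hsplitsum]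
    have h1 : ∑ i ∈ F, (if (i : ℕ) < p then (0:ℝ) else σ i) = 0 := by
      apply Finset.sum_eq_zero
      intro i hi
      rw [hF, Finset.mem_filter] at hi
      simp [hi.2]
    have h2 : ∑ i ∈ Fc, (if (i : ℕ) < p then (0:ℝ) else σ i) = ∑ i ∈ Fc, σ i := by
      apply Finset.sum_congr rfl
      intro i hi
      rw [hFc, Finset.mem_filter] at hi
      simp [hi.2]
    rw [h1, h2, zero_add]
  set T1 := ∑ i ∈ F, (σ i - π) * (1 - c i) with hT1
  set T2 := ∑ i ∈ Fc, (π - σ i) * c i with hT2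
  set T3 := π * ((p : ℝ) - ∑ i, c i) with hT3
  have hT1nn : 0 ≤ T1 := Finset.sum_nonneg fun i hi =>
    mul_nonneg (by linarith [hσF i hi]) (by linarith [hc1 i])
  have hT2nn : 0 ≤ T2 := Finset.sum_nonneg fun i hi =>
    mul_nonneg (by linarith [hσFc i hi]) (hc0 i)
  have hT3nn : 0 ≤ T3 := mul_nonneg hπ0 (by linarith [hsumc])
  have hId : ∑ i, σ i * (1 - c i) - ∑ i ∈ Fc, σ i = T1 + T2 + T3 := by
    have sa : T1 = (∑ i ∈ F, σ i * (1 - c i)) - (p:ℝ) * π + π * ∑ i ∈ F, c i := by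
      rw [hT1]
      calc ∑ i ∈ F, (σ i - π) * (1 - c i)
          = ∑ i ∈ F, (σ i * (1 - c i) - π + π * c i) :=
            Finset.sum_congr rfl (fun i _ => by ring)
        _ = (∑ i ∈ F, σ i * (1 - c i)) - (p:ℝ) * π + π * ∑ i ∈ F, c i := by
            rw [Finset.sum_add_distrib, Finset.sum_sub_distrib, Finset.sum_const,
              ← Finset.mul_sum, hcard, nsmul_eq_mul]
    have sb : T2 = π * (∑ i ∈ Fc, c i) - ∑ i ∈ Fc, σ i * c i := by
      rw [hT2]
      calc ∑ i ∈ Fc, (π - σ i) * c i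
          = ∑ i ∈ Fc, (π * c i - σ i * c i) := Finset.sum_congr rfl (fun i _ => by ring)
        _ = π * (∑ i ∈ Fc, c i) - ∑ i ∈ Fc, σ i * c i := by
            rw [Finset.sum_sub_distrib, ← Finset.mul_sum]
    have sc : ∑ i, σ i * (1 - c i)
        = (∑ i ∈ F, σ i * (1 - c i)) + (∑ i ∈ Fc, σ i) - ∑ i ∈ Fc, σ i * c i := by
      rw [hsplitsum (fun i => σ i * (1 - c i))]
      have : ∑ i ∈ Fc, σ i * (1 - c i) = (∑ i ∈ Fc, σ i) - ∑ i ∈ Fc, σ i * c i := by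
        calc ∑ i ∈ Fc, σ i * (1 - c i)
            = ∑ i ∈ Fc, (σ i - σ i * c i) := Finset.sum_congr rfl (fun i _ => by ring)
          _ = (∑ i ∈ Fc, σ i) - ∑ i ∈ Fc, σ i * c i := Finset.sum_sub_distrib _ _
      rw [this]
      ring
    have hT3' : T3 = π * (p:ℝ) - π * ∑ i, c i := by rw [hT3]; ring
    have he : π * ∑ i, c i = π * (∑ i ∈ F, c i) + π * ∑ i ∈ Fc, c i := by
      rw [hsplitsum c]; ring
    linarith [sa, sb, sc, hT3', he]
  have hmain : frobSq (Zh - Q * Yh) + (T1 + T2 + T3) ≤ 0 := by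
    have h := hminZ
    rw [key1, key2, key2'] at h
    linarith [hId]
  have hA0 : frobSq (Zh - Q * Yh) = 0 := by
    have := frobSq_nonneg (Zh - Q * Yh); linarith
  have hT10 : T1 = 0 := by have := frobSq_nonneg (Zh - Q * Yh); linarith
  have hT20 : T2 = 0 := by have := frobSq_nonneg (Zh - Q * Yh); linarith
  have hT30 : T3 = 0 := by have := frobSq_nonneg (Zh - Q * Yh); linarith
  have hZQ : Zh = Q * Yh := by
    have := frobSq_eq_zero_iff.1 hA0
    rwa [sub_eq_zero] at this
  -- forced values of c
  have hcF : ∀ i ∈ F, c i = 1 := by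
    intro i hi
    have hterm := (Finset.sum_eq_zero_iff_of_nonneg (fun i hi =>
      mul_nonneg (by linarith [hσF i hi] : (0:ℝ) ≤ σ i - π) (by linarith [hc1 i]))).1 hT10 i hi
    have hgt : 0 < σ i - π := by linarith [hσFgap i hi]
    have := mul_eq_zero.1 hterm
    rcases this with h | h
    · linarith
    · linarith
  have hcFc : ∀ i ∈ Fc, σ i * c i = 0 := by
    intro i hi
    by_cases hπz : π = 0
    · have h1 : σ i ≤ 0 := by rw [← hπz]; exact hσFc i hi
      have : σ i = 0 := le_antisymm h1 (hσnn i)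
      rw [this, zero_mul]
    · -- π ≠ 0 : from T3 = 0, ∑ c = p, so c vanishes on Fc
      have hsum_eq : ∑ i, c i = (p : ℝ) := by
        rw [hT3] at hT30
        rcases mul_eq_zero.1 hT30 with h | h
        · exact absurd h hπz
        · linarith
      have hFsum : ∑ i ∈ F, c i = (p : ℝ) := by
        rw [Finset.sum_congr rfl hcF, Finset.sum_const, hcard]
        simp
      have hFcsum : ∑ i ∈ Fc, c i = 0 := by
        have := hsplitsum c
        rw [hsum_eq, hFsum] at this
        linarith
      have hci : c i = 0 :=
        (Finset.sum_eq_zero_iff_of_nonneg (fun i _ => hc0 i)).1 hFcsum i hi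
      rw [hci, mul_zero]
  -- entrywise conclusion
  rw [hZQ]
  ext i j
  rw [Matrix.mul_apply, Matrix.of_apply]
  have hcol : ∀ k : Fin dy, Q i k * Yh k j = (if k = i ∧ (i:ℕ) < p then Yh k j else 0) := by
    intro k
    by_cases hk : (k : ℕ) < p
    · have hk1 : c k = 1 := hcF k (by rw [hF, Finset.mem_filter]; exact ⟨Finset.mem_univ _, hk⟩)
      rw [proj_col_of_diag_one hQs hQi hk1 i]
      by_cases hik : i = k
      · subst hik
        simp [hk]
      · rw [if_neg hik, if_neg (by rintro ⟨rfl, -⟩; exact hik rfl), zero_mul]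
    · have hk0 : σ k * c k = 0 := hcFc k (by rw [hFc, Finset.mem_filter]; exact ⟨Finset.mem_univ _, hk⟩)
      have hki : ¬ (k = i ∧ (i:ℕ) < p) := by
        rintro ⟨rfl, hip⟩; exact hk hip
      rw [if_neg hki]
      rcases mul_eq_zero.1 hk0 with h | h
      · rw [row_zero_of_sigma_zero hdiag h j, mul_zero]
      · rw [proj_col_of_diag_zero hQs hQi h i, zero_mul]
  rw [Finset.sum_congr rfl (fun k _ => hcol k)]
  by_cases hip : (i : ℕ) < p
  · rw [if_pos hip]
    rw [Finset.sum_eq_single i]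
    · simp [hip]
    · intro k _ hk; simp [hk]
    · intro h; exact absurd (Finset.mem_univ i) h
  · rw [if_neg hip]
    apply Finset.sum_eq_zero
    intro k _
    simp [hip]

/-- bias of the student-teacher-induced gradient flow in the undersampled
regime `N < d_x`.  Here `σ` is the decreasing list of eigenvalues of `YYᵀ`, `V` an orthogonal
matrix of corresponding eigenvectors, and `U = U_p` consists of the first
`p = min(d_x,d_1,d_y)` columns of `V`.  If the differentiable trajectories `(W₁(t), W₂(t))`
follow the gradient flow of the student-teacher loss with `‖W₁(0)‖_F ≤ δ`,
`‖W₂(t)‖_F ≤ M` for all `t ≥ 0`, and converge to a global minimizer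
`(W₂(∞), W₁(∞))` of the student-teacher loss, then
`‖W₂(∞)W₁(∞) − U_pU_pᵀ Y (X_εᵀX_ε)⁻¹ X_εᵀ‖_F ≤ M δ`. -/
theorem stmt19
    (N dx dy d1 : ℕ) (hN : N < dx)
    (X Xε : Matrix (Fin dx) (Fin N) ℝ) (hX : X.rank = N) (hXε : Xε.rank = N)
    (Y : Matrix (Fin dy) (Fin N) ℝ)
    (σ : Fin dy → ℝ) (hσ : Antitone σ)
    (V : Matrix (Fin dy) (Fin dy) ℝ) (hV : Vᵀ * V = 1)
    (hAV : Y * Yᵀ * V = V * Matrix.diagonal σ)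
    (hgap : Y.rank ≤ min dx (min d1 dy) ∨
      ∃ (h1 : 1 ≤ min dx (min d1 dy)) (h2 : min dx (min d1 dy) < dy),
        σ ⟨min dx (min d1 dy), h2⟩ < σ ⟨min dx (min d1 dy) - 1, by omega⟩)
    (U : Matrix (Fin dy) (Fin (min dx (min d1 dy))) ℝ)
    (hU : U = V.submatrix id (Fin.castLE ((min_le_right _ _).trans (min_le_right _ _))))
    (lam η δ M : ℝ) (hlam : 0 < lam) (hη : 0 < η) (hδ : 0 < δ) (hM : 0 < M)
    (Wt2 : Matrix (Fin dy) (Fin d1) ℝ) (Wt1 : Matrix (Fin d1) (Fin dx) ℝ)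
    (hteacher : ∀ (W2' : Matrix (Fin dy) (Fin d1) ℝ) (W1' : Matrix (Fin d1) (Fin dx) ℝ),
        frobSq (Wt2 * Wt1 * X - Y) ≤ frobSq (W2' * W1' * X - Y))
    (W1 : ℝ → Matrix (Fin d1) (Fin dx) ℝ) (W2 : ℝ → Matrix (Fin dy) (Fin d1) ℝ)
    (hW1deriv : ∀ t ∈ Set.Ici (0 : ℝ),
      HasDerivWithinAt W1
        (η • ((W2 t)ᵀ * (Y - W2 t * W1 t * Xε) * Xεᵀ)
          + (η * lam) • ((Wt1 * X - W1 t * Xε) * Xεᵀ)) (Set.Ici 0) t)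
    (hW2diff : ∀ t ∈ Set.Ici (0 : ℝ),
      ∃ D : Matrix (Fin dy) (Fin d1) ℝ, HasDerivWithinAt W2 D (Set.Ici 0) t)
    (hW1init : frobNorm (W1 0) ≤ δ)
    (hW2bd : ∀ t ∈ Set.Ici (0 : ℝ), frobNorm (W2 t) ≤ M)
    (W1inf : Matrix (Fin d1) (Fin dx) ℝ) (W2inf : Matrix (Fin dy) (Fin d1) ℝ)
    (hconv1 : Filter.Tendsto W1 Filter.atTop (nhds W1inf))
    (hconv2 : Filter.Tendsto W2 Filter.atTop (nhds W2inf))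
    (hmin : ∀ (W2' : Matrix (Fin dy) (Fin d1) ℝ) (W1' : Matrix (Fin d1) (Fin dx) ℝ),
        frobSq (W2inf * W1inf * Xε - Y) + lam * frobSq (W1inf * Xε - Wt1 * X)
          ≤ frobSq (W2' * W1' * Xε - Y) + lam * frobSq (W1' * Xε - Wt1 * X)) :
    frobNorm (W2inf * W1inf - U * Uᵀ * Y * (Xεᵀ * Xε)⁻¹ * Xεᵀ) ≤ M * δ := by
  classical
  obtain ⟨P, hP⟩ : ∃ P, P = min dx (min d1 dy) := ⟨_, rfl⟩
  have hpd1 : P ≤ d1 := by rw [hP]; exact le_trans (min_le_right _ _) (min_le_left _ _)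
  have hpdy : P ≤ dy := by rw [hP]; exact le_trans (min_le_right _ _) (min_le_right _ _)
  -- invertibility of Gram matrices
  have hdetXe : IsUnit (Xεᵀ * Xε).det :=
    isUnit_det_of_rank_full _ (by rw [Matrix.rank_transpose_mul_self]; exact hXε)
  have hdetX : IsUnit (Xᵀ * X).det :=
    isUnit_det_of_rank_full _ (by rw [Matrix.rank_transpose_mul_self]; exact hX)
  set G := (Xεᵀ * Xε)⁻¹ with hG
  set GX := (Xᵀ * X)⁻¹ with hGX
  have hGinv : G * (Xεᵀ * Xε) = 1 := Matrix.nonsing_inv_mul _ hdetXe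
  have hGinv' : (Xεᵀ * Xε) * G = 1 := Matrix.mul_nonsing_inv _ hdetXe
  have hGXinv : GX * (Xᵀ * X) = 1 := Matrix.nonsing_inv_mul _ hdetX
  set K := Xε * G * Xεᵀ with hK
  set Pc := (1 : Matrix (Fin dx) (Fin dx) ℝ) - K with hPc
  have hXK : Xεᵀ * K = Xεᵀ := by
    calc Xεᵀ * (Xε * G * Xεᵀ) = (Xεᵀ * Xε) * G * Xεᵀ := by simp only [Matrix.mul_assoc]
      _ = (1 : Matrix (Fin N) (Fin N) ℝ) * Xεᵀ := by rw [hGinv']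
      _ = Xεᵀ := Matrix.one_mul _
  have hXeP : Xεᵀ * Pc = 0 := by
    rw [hPc, Matrix.mul_sub, Matrix.mul_one, hXK, sub_self]
  have hKs : Kᵀ = K := by
    rw [hK]
    rw [Matrix.transpose_mul, Matrix.transpose_mul, Matrix.transpose_transpose]
    have hGs : Gᵀ = G := by
      rw [hG, Matrix.transpose_nonsing_inv, Matrix.transpose_mul,
        Matrix.transpose_transpose]
    rw [hGs, Matrix.mul_assoc]
  have hPs : Pcᵀ = Pc := by rw [hPc, Matrix.transpose_sub, Matrix.transpose_one, hKs]
  have hKi : K * K = K := by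
    calc K * K = Xε * G * (Xεᵀ * (Xε * G * Xεᵀ)) := by rw [hK]; simp only [Matrix.mul_assoc]
      _ = Xε * G * Xεᵀ := by rw [hXK]
      _ = K := hK.symm
  have hPi : Pc * Pc = Pc := by rw [hPc]; exact proj_oneSub_idem hKi
  ---- Flow invariance: W1inf * Pc = W1 0 * Pc
  have hPfix : W1inf * Pc = W1 0 * Pc := by
    set rmul : Matrix (Fin d1) (Fin dx) ℝ →ₗ[ℝ] Matrix (Fin d1) (Fin dx) ℝ :=
      { toFun := fun A => A * Pc
        map_add' := fun a b => Matrix.add_mul a b Pc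
        map_smul' := fun c a => by simp [Matrix.smul_mul] } with hrmul
    set rmulL := LinearMap.toContinuousLinearMap rmul with hrmulL
    have happ : ∀ A : Matrix (Fin d1) (Fin dx) ℝ, rmulL A = A * Pc := fun A => rfl
    have hg : ∀ t ∈ Set.Ici (0:ℝ),
        HasDerivWithinAt (fun s => W1 s * Pc) 0 (Set.Ici 0) t := by
      intro t ht
      have h2 := rmulL.hasFDerivAt.comp_hasDerivWithinAt t (hW1deriv t ht)
      have h3 : rmulL (η • ((W2 t)ᵀ * (Y - W2 t * W1 t * Xε) * Xεᵀ)
          + (η * lam) • ((Wt1 * X - W1 t * Xε) * Xεᵀ)) = 0 := by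
        rw [happ, Matrix.add_mul, Matrix.smul_mul, Matrix.smul_mul,
          Matrix.mul_assoc _ Xεᵀ Pc, Matrix.mul_assoc _ Xεᵀ Pc, hXeP,
          Matrix.mul_zero, Matrix.mul_zero, smul_zero, smul_zero, add_zero]
      exact h2.congr_deriv h3
    have hconst : ∀ t, 0 ≤ t → W1 t * Pc = W1 0 * Pc := by
      intro t ht
      have hcont : ContinuousOn (fun s => W1 s * Pc) (Set.Icc 0 t) := by
        intro x hx
        exact ((hg x hx.1).continuousWithinAt).mono Set.Icc_subset_Ici_self
      have hderiv : ∀ x ∈ Set.Ico (0:ℝ) t,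
          HasDerivWithinAt (fun s => W1 s * Pc) 0 (Set.Ici x) x := by
        intro x hx
        exact (hg x hx.1).mono (Set.Ici_subset_Ici.2 hx.1)
      exact constant_of_has_deriv_right_zero hcont hderiv t (Set.right_mem_Icc.2 ht)
    have hlim1 : Filter.Tendsto (fun s => W1 s * Pc) Filter.atTop (nhds (W1inf * Pc)) := by
      have := (rmulL.continuous.tendsto W1inf).comp hconv1
      exact this
    have hlim2 : Filter.Tendsto (fun s => W1 s * Pc) Filter.atTop (nhds (W1 0 * Pc)) := by
      apply Filter.Tendsto.congr' _ (tendsto_const_nhds)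
      filter_upwards [Filter.Ici_mem_atTop (0:ℝ)] with x hx
      exact (hconst x hx).symm
    exact tendsto_nhds_unique hlim1 hlim2
  ---- bound on frobNorm W2inf
  have hW2infbd : frobNorm W2inf ≤ M := by
    have hevt : ∀ i j, Filter.Tendsto (fun t => W2 t i j) Filter.atTop (nhds (W2inf i j)) := by
      intro i j
      set L : Matrix (Fin dy) (Fin d1) ℝ →ₗ[ℝ] ℝ :=
        { toFun := fun A => A i j
          map_add' := fun a b => rfl
          map_smul' := fun c a => rfl } with hLdef
      exact ((L.continuous_of_finiteDimensional).tendsto W2inf).comp hconv2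
    have hfs : Filter.Tendsto (fun t => frobSq (W2 t)) Filter.atTop (nhds (frobSq W2inf)) := by
      unfold frobSq
      apply tendsto_finset_sum
      intro i _
      apply tendsto_finset_sum
      intro j _
      exact (hevt i j).pow 2
    have hfn : Filter.Tendsto (fun t => frobNorm (W2 t)) Filter.atTop
        (nhds (frobNorm W2inf)) := (Real.continuous_sqrt.tendsto _).comp hfs
    exact le_of_tendsto hfn (Filter.eventually_atTop.2 ⟨0, fun t ht => hW2bd t ht⟩)
  ---- minimality of the product over all factorizations
  set B := Wt1 * X with hB
  have hBX : (B * G * Xεᵀ) * Xε = B := by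
    calc (B * G * Xεᵀ) * Xε = B * (G * (Xεᵀ * Xε)) := by simp only [Matrix.mul_assoc]
      _ = B := by rw [hGinv, Matrix.mul_one]
  have hmin1 := hmin Wt2 (B * G * Xεᵀ)
  have hmin1' : frobSq (W2inf * W1inf * Xε - Y) + lam * frobSq (W1inf * Xε - B)
      ≤ frobSq (Wt2 * B - Y) := by
    have e1 : Wt2 * (B * G * Xεᵀ) * Xε = Wt2 * B := by
      rw [Matrix.mul_assoc, hBX]
    have e2 : (B * G * Xεᵀ) * Xε - B = 0 := by rw [hBX, sub_self]
    rw [e1, e2] at hmin1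
    simpa [frobSq] using hmin1
  have hβ : ∀ (C2 : Matrix (Fin dy) (Fin d1) ℝ) (C1 : Matrix (Fin d1) (Fin N) ℝ),
      frobSq (W2inf * W1inf * Xε - Y) ≤ frobSq (C2 * C1 - Y) := by
    intro C2 C1
    have h2 := hteacher C2 (C1 * GX * Xᵀ)
    have e1 : C2 * (C1 * GX * Xᵀ) * X = C2 * C1 := by
      calc C2 * (C1 * GX * Xᵀ) * X = C2 * (C1 * (GX * (Xᵀ * X))) := by
            simp only [Matrix.mul_assoc]
        _ = C2 * C1 := by rw [hGXinv, Matrix.mul_one]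
    have e2 : Wt2 * Wt1 * X = Wt2 * B := by rw [hB, Matrix.mul_assoc]
    rw [e1, e2] at h2
    have hsnn : 0 ≤ lam * frobSq (W1inf * Xε - B) :=
      mul_nonneg (le_of_lt hlam) (frobSq_nonneg _)
    linarith
  ---- hat coordinates
  have hVVt : V * Vᵀ = 1 := mul_eq_one_comm.mp hV
  have hOrth' : (Vᵀ)ᵀ * Vᵀ = 1 := by rw [Matrix.transpose_transpose]; exact hVVt
  set Yh := Vᵀ * Y with hYh
  set Z := W2inf * W1inf * Xε with hZdef
  set Zh := Vᵀ * Z with hZh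
  have hdiagh : Yh * Yhᵀ = Matrix.diagonal σ := by
    rw [hYh, Matrix.transpose_mul, Matrix.transpose_transpose]
    calc Vᵀ * Y * (Yᵀ * V) = Vᵀ * (Y * Yᵀ * V) := by simp only [Matrix.mul_assoc]
      _ = Vᵀ * (V * Matrix.diagonal σ) := by rw [hAV]
      _ = (Vᵀ * V) * Matrix.diagonal σ := by rw [Matrix.mul_assoc]
      _ = Matrix.diagonal σ := by rw [hV, Matrix.one_mul]
  set DY := Matrix.of (fun (i : Fin dy) (j : Fin N) => if (i : ℕ) < P then Yh i j else 0)
    with hDY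
  have hσnn : ∀ i, 0 ≤ σ i := fun i => by
    rw [sigma_eq_row_sq hdiagh i]
    exact Finset.sum_nonneg fun _ _ => sq_nonneg _
  -- minimality in hat coordinates
  have hfrobZh : frobSq (Zh - Yh) = frobSq (Z - Y) := by
    rw [hZh, hYh, ← Matrix.mul_sub]
    exact frobSq_orthL hOrth' _
  have hminh : frobSq (Zh - Yh) ≤ frobSq (DY - Yh) := by
    have hcand := cand_factor (N := N) hpd1 Yh
    set C2h := Matrix.of (fun (i : Fin dy) (k : Fin d1) =>
      if (i : ℕ) = (k : ℕ) ∧ (i : ℕ) < P then (1:ℝ) else 0) with hC2h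
    set C1h := Matrix.of (fun (k : Fin d1) (j : Fin N) =>
      if h : (k : ℕ) < dy then Yh ⟨k, h⟩ j else 0) with hC1h
    have h3 := hβ (V * C2h) C1h
    have e1 : (V * C2h) * C1h = V * DY := by
      rw [Matrix.mul_assoc, hcand, hDY]
    rw [e1] at h3
    have e2 : frobSq (V * DY - Y) = frobSq (DY - Yh) := by
      have : Vᵀ * (V * DY - Y) = DY - Yh := by
        rw [Matrix.mul_sub, ← Matrix.mul_assoc, hV, Matrix.one_mul, hYh]
      rw [← this, frobSq_orthL hOrth']
    rw [hfrobZh, ← e2]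
    exact h3
  ---- identify Zh = DY
  have hZD : Zh = DY := by
    rcases hgap with hrankY | ⟨h1, h2, hgaplt⟩
    · -- rank case
      have hYhrank : Yh.rank ≤ P := by
        rw [hYh, hP]
        exact le_trans (Matrix.rank_mul_le_right Vᵀ Y) hrankY
      have hσ0 : ∀ i : Fin dy, P ≤ (i : ℕ) → σ i = 0 :=
        sigma_tail_zero_of_rank_le hσ hσnn hdiagh hYhrank
      have hDYeq : DY = Yh := by
        rw [hDY]
        ext i j
        rw [Matrix.of_apply]
        by_cases hip : (i : ℕ) < P
        · rw [if_pos hip]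
        · rw [if_neg hip, row_zero_of_sigma_zero hdiagh (hσ0 i (by omega)) j]
      rw [hDYeq] at hminh ⊢
      have : frobSq (Zh - Yh) = 0 := le_antisymm (by simpa [frobSq] using hminh)
        (frobSq_nonneg _)
      have := frobSq_eq_zero_iff.1 this
      rwa [sub_eq_zero] at this
    · -- gap case
      have hrankZh : Zh.rank ≤ P := by
        have hr1 : Zh.rank ≤ N := by
          have := Matrix.rank_le_width Zh
          exact this
        have hr2 : Zh.rank ≤ d1 := by
          have e : Zh = (Vᵀ * W2inf) * (W1inf * Xε) := by
            rw [hZh, hZdef]; simp only [Matrix.mul_assoc]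
          rw [e]
          exact le_trans (Matrix.rank_mul_le_left _ _) (Matrix.rank_le_width _)
        have hr3 : Zh.rank ≤ dy := Matrix.rank_le_height Zh
        rw [hP]
        rw [le_min_iff, le_min_iff]
        exact ⟨by omega, hr2, hr3⟩
      have h1' : 1 ≤ P := by rw [hP]; exact h1
      have h2' : P < dy := by rw [hP]; exact h2
      have hgaplt' : σ ⟨P, h2'⟩ < σ ⟨P - 1, by omega⟩ := by
        have e1 : (⟨P, h2'⟩ : Fin dy) = ⟨min dx (min d1 dy), h2⟩ := Fin.val_injective hP
        have e2 : (⟨P - 1, by omega⟩ : Fin dy)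
            = ⟨min dx (min d1 dy) - 1, by omega⟩ := Fin.val_injective (by simp [hP])
        rw [e1, e2]
        exact hgaplt
      exact EY_core P h1' h2' σ hσ Yh Zh hdiagh hgaplt' hrankZh hminh
  ---- back-transform : Z = U * Uᵀ * Y
  have hZfinal : Z = U * Uᵀ * Y := by
    have hback : V * Zh = Z := by
      rw [hZh, ← Matrix.mul_assoc, hVVt, Matrix.one_mul]
    set d : Fin dy → ℝ := fun i => if (i : ℕ) < P then 1 else 0 with hd
    have hDmat : DY = Matrix.diagonal d * Yh := by
      rw [hDY]
      ext i j
      simp only [Matrix.of_apply, Matrix.diagonal_mul, hd]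
      by_cases hip : (i : ℕ) < P
      · rw [if_pos hip, if_pos hip, one_mul]
      · rw [if_neg hip, if_neg hip, zero_mul]
    have hUU : U * Uᵀ = V * Matrix.diagonal d * Vᵀ := by
      ext i j
      rw [Matrix.mul_apply]
      have e1 : ∀ k : Fin dy, (V * Matrix.diagonal d) i k * Vᵀ k j
          = if (k : ℕ) < P then V i k * V j k else 0 := by
        intro k
        simp only [Matrix.mul_diagonal, Matrix.transpose_apply, hd]
        by_cases hkp : (k : ℕ) < P
        · rw [if_pos hkp, if_pos hkp, mul_one]
        · rw [if_neg hkp, if_neg hkp, mul_zero, zero_mul]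
      rw [Matrix.mul_apply, Finset.sum_congr rfl (fun k _ => e1 k)]
      have hpdy2 : min dx (min d1 dy) ≤ dy := le_trans (min_le_right _ _) (min_le_right _ _)
      have hFim : Finset.univ.filter (fun k : Fin dy => (k:ℕ) < P)
          = Finset.image (Fin.castLE hpdy2) Finset.univ := by
        ext x
        simp only [Finset.mem_filter, Finset.mem_univ, true_and, Finset.mem_image]
        constructor
        · intro hx
          rw [hP] at hx
          exact ⟨⟨(x:ℕ), hx⟩, Fin.val_injective rfl⟩
        · rintro ⟨y, rfl⟩
          rw [hP]
          exact y.isLt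
      rw [← Finset.sum_filter, hFim,
        Finset.sum_image (fun a _ b _ h => Fin.castLE_injective hpdy2 h)]
      apply Finset.sum_congr rfl
      intro k _
      rw [hU]
      simp [Matrix.submatrix_apply, Matrix.transpose_apply]
    calc Z = V * Zh := hback.symm
      _ = V * (Matrix.diagonal d * Yh) := by rw [hZD, hDmat]
      _ = (V * Matrix.diagonal d * Vᵀ) * Y := by rw [hYh]; simp only [Matrix.mul_assoc]
      _ = U * Uᵀ * Y := by rw [← hUU]
  ---- final assembly
  have hsplitW : W2inf * W1inf - U * Uᵀ * Y * G * Xεᵀ = W2inf * (W1 0 * Pc) := by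
    have e0 : W2inf * W1inf = W2inf * W1inf * K + W2inf * W1inf * Pc := by
      rw [← Matrix.mul_add, hPc, add_sub_cancel, Matrix.mul_one]
    have e1 : W2inf * W1inf * K = U * Uᵀ * Y * G * Xεᵀ := by
      calc W2inf * W1inf * K = (W2inf * W1inf * Xε) * (G * Xεᵀ) := by
            rw [hK]; simp only [Matrix.mul_assoc]
        _ = (U * Uᵀ * Y) * (G * Xεᵀ) := by rw [← hZdef, hZfinal]
        _ = U * Uᵀ * Y * G * Xεᵀ := by simp only [Matrix.mul_assoc]
    have e2 : W2inf * W1inf * Pc = W2inf * (W1 0 * Pc) := by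
      rw [Matrix.mul_assoc, hPfix]
    rw [e0, e1, e2]
    abel
  rw [hsplitW]
  have hb1 : frobNorm (W1 0 * Pc) ≤ frobNorm (W1 0) := by
    rw [frobNorm, frobNorm]
    exact Real.sqrt_le_sqrt (frobSq_projR_le hPs hPi _)
  calc frobNorm (W2inf * (W1 0 * Pc)) ≤ frobNorm W2inf * frobNorm (W1 0 * Pc) :=
        frobNorm_mul_le _ _
    _ ≤ M * δ := by
        apply mul_le_mul hW2infbd (le_trans hb1 hW1init) (frobNorm_nonneg _)
          (le_of_lt hM)
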